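/- arXiv:1612.08597 — 5 statements merged into one kernel-verified Lean document; each statement's English description precedes it below -/
import Mathlib

section
/- For 0 < |q| < 1 and |z| < 1, the q-binomial theorem holds: ∑_{n=0}^∞ ((a;q)_n / (q;q)_n) z^n = (az;q)_∞ / (z;q)_∞, where (a;q)_n = ∏_{j=0}^{n-1}(1 - a q^j) and (a;q)_∞ = ∏_{n=0}^∞ (1 - a q^n). -/
/-- finite q-Pochhammer symbol `(a;q)_n`. -/
noncomputable def qPoch (q a : ℂ) (n : ℕ) : ℂ := ∏ j ∈ Finset.range n, (1 - a * q ^ j)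

/-- infinite q-Pochhammer symbol `(a;q)_∞`. -/
noncomputable def qPochInf (q a : ℂ) : ℂ := ∏' n : ℕ, (1 - a * q ^ n)

open Filter Finset Complex

namespace QBinomialAux

/-- Weierstrass product inequality. -/
lemma weier (s : Finset ℕ) (x : ℕ → ℝ) (h0 : ∀ j, 0 ≤ x j) (h1 : ∀ j, x j ≤ 1) :
    1 - ∑ j ∈ s, x j ≤ ∏ j ∈ s, (1 - x j) := by
  induction s using Finset.cons_induction with
  | empty => simp
  | cons i s hi ih =>
    rw [Finset.prod_cons, Finset.sum_cons]
    have hs : 0 ≤ ∑ j ∈ s, x j := Finset.sum_nonneg fun j _ => h0 j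
    nlinarith [h0 i, h1 i, ih]

lemma denom_lb {r : ℝ} (hr0 : 0 ≤ r) (hr1 : r < 1) :
    ∃ δ > 0, ∀ n, δ ≤ ∏ j ∈ Finset.range n, (1 - r ^ (j + 1)) := by
  have hfac : ∀ j : ℕ, 0 < 1 - r ^ (j + 1) := by
    intro j
    have : r ^ (j + 1) ≤ r ^ 1 := pow_le_pow_of_le_one hr0 hr1.le (by omega)
    simp only [pow_one] at this
    linarith
  obtain ⟨m, hm⟩ := exists_pow_lt_of_lt_one (x := (1 - r) / 2) (by linarith) hr1
  have hPm : 0 < ∏ j ∈ Finset.range m, (1 - r ^ (j + 1)) :=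
    Finset.prod_pos fun j _ => hfac j
  refine ⟨(∏ j ∈ Finset.range m, (1 - r ^ (j + 1))) / 2, by positivity, fun n => ?_⟩
  rcases le_or_gt n m with h | h
  · have hsub : ∏ j ∈ Finset.range m, (1 - r ^ (j + 1))
        = (∏ j ∈ Finset.range n, (1 - r ^ (j + 1))) * ∏ j ∈ Finset.Ico n m, (1 - r ^ (j + 1)) :=
      (Finset.prod_range_mul_prod_Ico _ h).symm
    have h1 : ∏ j ∈ Finset.Ico n m, (1 - r ^ (j + 1)) ≤ 1 :=
      Finset.prod_le_one (fun j _ => (hfac j).le) (fun j _ => by nlinarith [pow_nonneg hr0 (j+1)])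
    have h2 : 0 < ∏ j ∈ Finset.range n, (1 - r ^ (j + 1)) := Finset.prod_pos fun j _ => hfac j
    nlinarith
  · have hsub : ∏ j ∈ Finset.range n, (1 - r ^ (j + 1))
        = (∏ j ∈ Finset.range m, (1 - r ^ (j + 1))) * ∏ j ∈ Finset.Ico m n, (1 - r ^ (j + 1)) :=
      (Finset.prod_range_mul_prod_Ico _ h.le).symm
    have hsum : ∑ j ∈ Finset.Ico m n, r ^ (j + 1) ≤ 1 / 2 := by
      have heq : ∑ j ∈ Finset.Ico m n, r ^ (j + 1) = r * ∑ j ∈ Finset.Ico m n, r ^ j := by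
        rw [Finset.mul_sum]; exact Finset.sum_congr rfl fun j _ => by ring
      rw [heq]
      have hg := geom_sum_Ico_le_of_lt_one hr0 hr1 (m := m) (n := n)
      have h3 : r * (r ^ m / (1 - r)) ≤ r ^ m / (1 - r) := by
        have : 0 ≤ r ^ m / (1 - r) := div_nonneg (pow_nonneg hr0 m) (by linarith)
        nlinarith
      have h4 : r ^ m / (1 - r) ≤ 1 / 2 := by
        rw [div_le_div_iff₀ (by linarith) (by norm_num)]
        nlinarith
      calc r * ∑ j ∈ Finset.Ico m n, r ^ j ≤ r * (r ^ m / (1 - r)) :=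
            mul_le_mul_of_nonneg_left hg hr0
        _ ≤ 1 / 2 := h3.trans h4
    have hw := weier (Finset.Ico m n) (fun j => r ^ (j + 1))
      (fun j => pow_nonneg hr0 _) (fun j => by nlinarith [hfac j])
    have h5 : (1 : ℝ) / 2 ≤ ∏ j ∈ Finset.Ico m n, (1 - r ^ (j + 1)) := by
      refine le_trans ?_ hw; linarith
    nlinarith

variable {q : ℂ}

lemma fac_ne (hq1 : ‖q‖ < 1) {x : ℂ} (hx : ‖x‖ < 1) (n : ℕ) : (1 : ℂ) - x * q ^ n ≠ 0 := by
  have : ‖x * q ^ n‖ < 1 := by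
    rw [norm_mul, norm_pow]
    calc ‖x‖ * ‖q‖ ^ n ≤ ‖x‖ * 1 :=
          mul_le_mul_of_nonneg_left (pow_le_one₀ (norm_nonneg q) hq1.le) (norm_nonneg x)
      _ < 1 := by simpa using hx
  intro h
  rw [sub_eq_zero] at h
  rw [← h] at this
  simp at this

lemma summable_log (hq1 : ‖q‖ < 1) (x : ℂ) :
    Summable fun n => Complex.log (1 - x * q ^ n) := by
  have hgeo : Summable fun n : ℕ => 3 / 2 * (‖x‖ * ‖q‖ ^ n) :=
    ((summable_geometric_of_lt_one (norm_nonneg q) hq1).mul_left ‖x‖).mul_left (3 / 2)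
  refine .of_norm_bounded_eventually_nat hgeo ?_
  have htend : Tendsto (fun n : ℕ => ‖x‖ * ‖q‖ ^ n) atTop (nhds 0) := by
    simpa using (tendsto_pow_atTop_nhds_zero_of_lt_one (norm_nonneg q) hq1).const_mul ‖x‖
  filter_upwards [htend.eventually_le_const (by norm_num : (0:ℝ) < 1/2)] with n hn
  have h2 : ‖-(x * q ^ n)‖ ≤ 1 / 2 := by
    rw [norm_neg, norm_mul, norm_pow]; exact hn
  have h3 := Complex.norm_log_one_add_half_le_self h2
  rw [show (1 : ℂ) + -(x * q ^ n) = 1 - x * q ^ n by ring] at h3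
  refine h3.trans ?_
  rw [norm_neg, norm_mul, norm_pow]

lemma mult (hq1 : ‖q‖ < 1) (x : ℂ) : Multipliable fun n : ℕ => 1 - x * q ^ n := by
  by_cases h : ∀ n : ℕ, (1 : ℂ) - x * q ^ n ≠ 0
  · exact Complex.multipliable_of_summable_log (summable_log hq1 x)
  · push_neg at h
    obtain ⟨N, hN⟩ := h
    refine ⟨0, ?_⟩
    rw [HasProd]
    refine tendsto_const_nhds.congr' ?_
    filter_upwards [eventually_ge_atTop {N}] with s hs
    exact (Finset.prod_eq_zero (hs (Finset.mem_singleton_self N)) hN).symm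

lemma nonvanish (hq1 : ‖q‖ < 1) {x : ℂ} (hx : ‖x‖ < 1) : qPochInf q x ≠ 0 := by
  have h := Complex.cexp_tsum_eq_tprod (f := fun n => 1 - x * q ^ n)
    (fun n => fac_ne hq1 hx n) (summable_log hq1 x)
  rw [qPochInf, ← h]
  exact Complex.exp_ne_zero _

lemma coeff_bound (hq1 : ‖q‖ < 1) (a : ℂ) :
    ∃ M : ℝ, ∀ n, ‖qPoch q a n / qPoch q q n‖ ≤ M := by
  obtain ⟨δ, hδ, hδle⟩ := denom_lb (norm_nonneg q) hq1
  set A : ℝ := Real.exp (‖a‖ * ((1 - ‖q‖)⁻¹)) with hA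
  refine ⟨A / δ, fun n => ?_⟩
  have hnum : ‖qPoch q a n‖ ≤ A := by
    rw [qPoch, norm_prod]
    calc ∏ j ∈ Finset.range n, ‖1 - a * q ^ j‖
        ≤ ∏ j ∈ Finset.range n, Real.exp (‖a‖ * ‖q‖ ^ j) := by
          refine Finset.prod_le_prod (fun j _ => norm_nonneg _) (fun j _ => ?_)
          calc ‖1 - a * q ^ j‖ ≤ ‖(1 : ℂ)‖ + ‖a * q ^ j‖ := norm_sub_le _ _
            _ = 1 + ‖a‖ * ‖q‖ ^ j := by rw [norm_one, norm_mul, norm_pow]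
            _ ≤ Real.exp (‖a‖ * ‖q‖ ^ j) := by
                have := Real.add_one_le_exp (‖a‖ * ‖q‖ ^ j); linarith
      _ = Real.exp (∑ j ∈ Finset.range n, ‖a‖ * ‖q‖ ^ j) := (Real.exp_sum _ _).symm
      _ ≤ A := by
          rw [hA, Real.exp_le_exp, ← Finset.mul_sum]
          refine mul_le_mul_of_nonneg_left ?_ (norm_nonneg a)
          have := geom_sum_Ico_le_of_lt_one (norm_nonneg q) hq1 (m := 0) (n := n)
          rw [Finset.range_eq_Ico]
          simpa using this
  have hden : δ ≤ ‖qPoch q q n‖ := by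
    refine (hδle n).trans ?_
    rw [qPoch, norm_prod]
    refine Finset.prod_le_prod (fun j _ => ?_) (fun j _ => ?_)
    · have : ‖q‖ ^ (j + 1) ≤ ‖q‖ ^ 1 := pow_le_pow_of_le_one (norm_nonneg q) hq1.le (by omega)
      simp only [pow_one] at this; linarith
    · calc 1 - ‖q‖ ^ (j + 1) = ‖(1:ℂ)‖ - ‖q * q ^ j‖ := by
            rw [norm_one, norm_mul, norm_pow]; ring
        _ ≤ ‖1 - q * q ^ j‖ := norm_sub_norm_le _ _
  rw [norm_div]
  exact div_le_div₀ (Real.exp_pos _).le hnum hδ hden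

lemma summable_norm_coeff (hq1 : ‖q‖ < 1) (a : ℂ) {w : ℂ} (hw : ‖w‖ < 1) :
    Summable fun n => ‖qPoch q a n / qPoch q q n * w ^ n‖ := by
  obtain ⟨M, hM⟩ := coeff_bound hq1 a
  refine Summable.of_nonneg_of_le (fun n => norm_nonneg _) (fun n => ?_)
    ((summable_geometric_of_lt_one (norm_nonneg w) hw).mul_left M)
  rw [norm_mul, norm_pow]
  exact mul_le_mul_of_nonneg_right (hM n) (pow_nonneg (norm_nonneg w) n)

lemma summable_coeff (hq1 : ‖q‖ < 1) (a : ℂ) {w : ℂ} (hw : ‖w‖ < 1) :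
    Summable fun n => qPoch q a n / qPoch q q n * w ^ n :=
  (summable_norm_coeff hq1 a hw).of_norm

lemma qPoch_q_ne (hq1 : ‖q‖ < 1) (n : ℕ) : qPoch q q n ≠ 0 := by
  rw [qPoch]
  exact Finset.prod_ne_zero_iff.2 fun j _ => fac_ne hq1 hq1 j

/-- the coefficient `c_n = (a;q)_n / (q;q)_n`. -/
noncomputable def qCoef (q a : ℂ) (n : ℕ) : ℂ := qPoch q a n / qPoch q q n

lemma hrec (hq1 : ‖q‖ < 1) (a : ℂ) (n : ℕ) :
    qCoef q a (n + 1) * (1 - q ^ (n + 1)) = qCoef q a n * (1 - a * q ^ n) := by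
  rw [qCoef, qCoef]
  have e1 : qPoch q a (n + 1) = qPoch q a n * (1 - a * q ^ n) := Finset.prod_range_succ _ _
  have e2 : qPoch q q (n + 1) = qPoch q q n * (1 - q * q ^ n) := Finset.prod_range_succ _ _
  have h1 : (1 : ℂ) - q ^ (n + 1) = 1 - q * q ^ n := by ring
  rw [e1, e2, h1]
  have hd := qPoch_q_ne hq1 n
  have hf := fac_ne hq1 hq1 n
  rw [div_mul_eq_mul_div, mul_div_mul_right _ _ hf]
  ring

lemma summable_qCoef (hq1 : ‖q‖ < 1) (a : ℂ) {w : ℂ} (hw : ‖w‖ < 1) :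
    Summable fun n => qCoef q a n * w ^ n :=
  (summable_coeff hq1 a hw).congr fun n => by rw [qCoef]

lemma summable_norm_qCoef (hq1 : ‖q‖ < 1) (a : ℂ) {w : ℂ} (hw : ‖w‖ < 1) :
    Summable fun n => ‖qCoef q a n * w ^ n‖ :=
  (summable_norm_coeff hq1 a hw).congr fun n => by rw [qCoef]

/-- the power series `F(w) = ∑ c_n w^n`. -/
noncomputable def qF (q a w : ℂ) : ℂ := ∑' n : ℕ, qCoef q a n * w ^ n

lemma funeq (hq1 : ‖q‖ < 1) (a : ℂ) {w : ℂ} (hw : ‖w‖ < 1) :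
    (1 - w) * qF q a w = (1 - a * w) * qF q a (q * w) := by
  have hqw : ‖q * w‖ < 1 := by
    rw [norm_mul]
    nlinarith [norm_nonneg q, norm_nonneg w]
  set c : ℕ → ℂ := qCoef q a with hc
  have S1 : Summable fun n => c n * w ^ n := summable_qCoef hq1 a hw
  have S2 : Summable fun n => c n * (q * w) ^ n := summable_qCoef hq1 a hqw
  have Sshift : Summable fun n => c (n + 1) * w ^ (n + 1) := (summable_nat_add_iff (f := fun n => c n * w ^ n) 1).2 S1
  have Sm1 : Summable fun n => c n * w ^ (n + 1) := (S1.mul_right w).congr fun n => by ring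
  have Sshift2 : Summable fun n => c (n + 1) * (q * w) ^ (n + 1) := (summable_nat_add_iff (f := fun n => c n * (q * w) ^ n) 1).2 S2
  have Sm2 : Summable fun n => a * c n * q ^ n * w ^ (n + 1) :=
    (S2.mul_right (a * w)).congr fun n => by ring
  calc (1 - w) * qF q a w
      = (c 0 + ∑' n, c (n + 1) * w ^ (n + 1)) - ∑' n, c n * w ^ (n + 1) := by
        rw [sub_mul, one_mul]
        congr 1
        · rw [qF, Summable.tsum_eq_zero_add S1]
          simp
        · rw [qF, ← tsum_mul_left]
          exact tsum_congr fun n => by ring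
    _ = c 0 + ∑' n, (c (n + 1) * w ^ (n + 1) - c n * w ^ (n + 1)) := by
        rw [Summable.tsum_sub Sshift Sm1]; ring
    _ = c 0 + ∑' n, (c (n + 1) * (q * w) ^ (n + 1) - a * c n * q ^ n * w ^ (n + 1)) := by
        congr 1
        refine tsum_congr fun n => ?_
        have h := hrec hq1 a n
        rw [← hc] at h
        linear_combination w ^ (n + 1) * h
    _ = (c 0 + ∑' n, c (n + 1) * (q * w) ^ (n + 1)) - ∑' n, a * c n * q ^ n * w ^ (n + 1) := by
        rw [Summable.tsum_sub Sshift2 Sm2]; ring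
    _ = (1 - a * w) * qF q a (q * w) := by
        rw [sub_mul, one_mul]
        congr 1
        · rw [qF, Summable.tsum_eq_zero_add S2]
          simp
        · rw [qF, ← tsum_mul_left]
          exact tsum_congr fun n => by ring

lemma iter (hq1 : ‖q‖ < 1) (a : ℂ) {z : ℂ} (hz : ‖z‖ < 1) (N : ℕ) :
    qPoch q z N * qF q a z = qPoch q (a * z) N * qF q a (q ^ N * z) := by
  induction N with
  | zero => simp [qPoch]
  | succ N ih =>
    have hN : ‖q ^ N * z‖ < 1 := by
      rw [norm_mul, norm_pow]
      calc ‖q‖ ^ N * ‖z‖ ≤ 1 * ‖z‖ :=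
            mul_le_mul_of_nonneg_right (pow_le_one₀ (norm_nonneg q) hq1.le) (norm_nonneg z)
        _ < 1 := by simpa using hz
    have h2 := funeq hq1 a hN
    rw [show q * (q ^ N * z) = q ^ (N + 1) * z by ring] at h2
    have e1 : qPoch q z (N + 1) = qPoch q z N * (1 - z * q ^ N) := Finset.prod_range_succ _ _
    have e2 : qPoch q (a * z) (N + 1) = qPoch q (a * z) N * (1 - a * z * q ^ N) :=
      Finset.prod_range_succ _ _
    rw [e1, e2]
    linear_combination (1 - z * q ^ N) * ih + qPoch q (a * z) N * h2

end QBinomialAux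

open QBinomialAux in
/-- The q-binomial theorem. -/
theorem q_binomial_theorem (q a z : ℂ) (hq0 : 0 < ‖q‖) (hq1 : ‖q‖ < 1) (hz : ‖z‖ < 1) :
    ∑' n : ℕ, qPoch q a n / qPoch q q n * z ^ n
      = qPochInf q (a * z) / qPochInf q z := by
  set c : ℕ → ℂ := qCoef q a with hc
  have hc0 : c 0 = 1 := by simp [hc, qCoef, qPoch]
  -- limit of F(q^N z) is 1
  have hFlim : Tendsto (fun N => qF q a (q ^ N * z)) atTop (nhds 1) := by
    set K : ℝ := ∑' n, ‖c (n + 1) * z ^ (n + 1)‖ with hK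
    have hnz : ∀ N : ℕ, ‖q ^ N * z‖ < 1 := by
      intro N
      rw [norm_mul, norm_pow]
      calc ‖q‖ ^ N * ‖z‖ ≤ 1 * ‖z‖ :=
            mul_le_mul_of_nonneg_right (pow_le_one₀ (norm_nonneg q) hq1.le) (norm_nonneg z)
        _ < 1 := by simpa using hz
    have key : ∀ N : ℕ, ‖qF q a (q ^ N * z) - 1‖ ≤ ‖q‖ ^ N * K := by
      intro N
      have SN : Summable fun n => c n * (q ^ N * z) ^ n := summable_qCoef hq1 a (hnz N)
      have hFN : qF q a (q ^ N * z) - 1 = ∑' n, c (n + 1) * (q ^ N * z) ^ (n + 1) := by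
        rw [qF, Summable.tsum_eq_zero_add SN]
        simp [hc0]
      rw [hFN]
      have T1 : Summable fun n => ‖c (n + 1) * (q ^ N * z) ^ (n + 1)‖ :=
        (summable_nat_add_iff (f := fun n => ‖c n * (q ^ N * z) ^ n‖) 1).2 (summable_norm_qCoef hq1 a (hnz N))
      have T2 : Summable fun n => ‖q‖ ^ N * ‖c (n + 1) * z ^ (n + 1)‖ :=
        ((summable_nat_add_iff (f := fun n => ‖c n * z ^ n‖) 1).2 (summable_norm_qCoef hq1 a hz)).mul_left _
      calc ‖∑' n, c (n + 1) * (q ^ N * z) ^ (n + 1)‖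
          ≤ ∑' n, ‖c (n + 1) * (q ^ N * z) ^ (n + 1)‖ := norm_tsum_le_tsum_norm T1
        _ ≤ ∑' n, ‖q‖ ^ N * ‖c (n + 1) * z ^ (n + 1)‖ := by
            refine Summable.tsum_le_tsum (fun n => ?_) T1 T2
            have hpow : ‖q‖ ^ (N * (n + 1)) ≤ ‖q‖ ^ N :=
              pow_le_pow_of_le_one (norm_nonneg q) hq1.le (Nat.le_mul_of_pos_right N (by omega))
            calc ‖c (n + 1) * (q ^ N * z) ^ (n + 1)‖
                = ‖q‖ ^ (N * (n + 1)) * (‖c (n + 1)‖ * ‖z‖ ^ (n + 1)) := by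
                  rw [norm_mul, norm_pow, norm_mul, norm_pow, mul_pow, ← pow_mul]
                  ring
              _ ≤ ‖q‖ ^ N * (‖c (n + 1)‖ * ‖z‖ ^ (n + 1)) := by
                  refine mul_le_mul_of_nonneg_right hpow ?_
                  positivity
              _ = ‖q‖ ^ N * ‖c (n + 1) * z ^ (n + 1)‖ := by
                  rw [norm_mul, norm_pow]
        _ = ‖q‖ ^ N * K := by rw [tsum_mul_left]
    have h0 : Tendsto (fun N => qF q a (q ^ N * z) - 1) atTop (nhds 0) := by
      refine squeeze_zero_norm key ?_
      have := (tendsto_pow_atTop_nhds_zero_of_lt_one (norm_nonneg q) hq1).mul_const K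
      simpa using this
    have := h0.add_const 1
    simpa using this
  have t1 : Tendsto (fun N => qPoch q z N) atTop (nhds (qPochInf q z)) :=
    (mult hq1 z).hasProd.tendsto_prod_nat
  have t2 : Tendsto (fun N => qPoch q (a * z) N) atTop (nhds (qPochInf q (a * z))) :=
    (mult hq1 (a * z)).hasProd.tendsto_prod_nat
  have huniq : qPochInf q z * qF q a z = qPochInf q (a * z) * 1 :=
    tendsto_nhds_unique (t1.mul_const (qF q a z))
      (Tendsto.congr (fun N => (iter hq1 a hz N).symm) (t2.mul hFlim))
  have hnz := nonvanish hq1 hz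
  have hgoal : (∑' n : ℕ, qPoch q a n / qPoch q q n * z ^ n) = qF q a z := by
    rw [qF]
    exact tsum_congr fun n => by rw [qCoef]
  rw [hgoal, eq_div_iff hnz]
  linear_combination huniq
end

section
/- For 0 < |q| < 1 and |z| small enough that all series converge, e_q(αz) E_q(βz) = ∑_{n=0}^∞ ((-β α^{-1}; q)_n / (q;q)_n) (αz)^n, where e_q(z) = ∑_{n=0}^∞ z^n/(q;q)_n and E_q(z) = ∑_{n=0}^∞ q^{binom(n,2)} z^n/(q;q)_n. -/
noncomputable def qPoch3 (q a : ℂ) (n : ℕ) : ℂ := ∏ j ∈ Finset.range n, (1 - a * q ^ j)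

open Finset Filter

lemma qPoch3_succ (q a : ℂ) (n : ℕ) :
    qPoch3 q a (n + 1) = qPoch3 q a n * (1 - a * q ^ n) :=
  Finset.prod_range_succ _ _

lemma one_sub_q_ne (q : ℂ) (hq1 : ‖q‖ < 1) (m : ℕ) : 1 - q * q ^ m ≠ 0 := by
  intro h
  have h1 : (1 : ℂ) = q * q ^ m := by linear_combination h
  have : ‖q * q ^ m‖ < 1 := by
    rw [norm_mul, norm_pow]
    calc ‖q‖ * ‖q‖ ^ m ≤ ‖q‖ * 1 := by
          gcongr
          exact pow_le_one₀ (norm_nonneg q) hq1.le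
      _ < 1 := by simpa using hq1
  rw [← h1] at this
  simp at this

lemma qPoch3_ne_zero (q : ℂ) (hq1 : ‖q‖ < 1) (n : ℕ) : qPoch3 q q n ≠ 0 := by
  refine Finset.prod_ne_zero_iff.mpr fun j _ => one_sub_q_ne q hq1 j

/-- q-binomial theorem (finite form). -/
lemma qbinom (q x : ℂ) (hq1 : ‖q‖ < 1) (n : ℕ) :
    qPoch3 q (-x) n / qPoch3 q q n
      = ∑ k ∈ Finset.range (n + 1),
          q ^ (k.choose 2) * x ^ k / (qPoch3 q q k * qPoch3 q q (n - k)) := by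
  have hQ := qPoch3_ne_zero q hq1
  have hone := one_sub_q_ne q hq1
  induction n with
  | zero => simp [qPoch3]
  | succ n ih =>
    have key : ∀ k ∈ Finset.range (n + 1 + 1),
        (1 - q * q ^ n) * (q ^ (k.choose 2) * x ^ k /
            (qPoch3 q q k * qPoch3 q q (n + 1 - k)))
        = (if k ≤ n then q ^ (k.choose 2) * x ^ k /
              (qPoch3 q q k * qPoch3 q q (n - k)) else 0)
          + (if k = 0 then 0 else q ^ n * x *
              (q ^ ((k - 1).choose 2) * x ^ (k - 1) /
                (qPoch3 q q (k - 1) * qPoch3 q q (n - (k - 1))))) := by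
      intro k hk
      rw [Finset.mem_range] at hk
      rcases Nat.eq_zero_or_pos k with rfl | hk0
      · simp only [if_pos (Nat.zero_le n), if_pos rfl, add_zero,
          Nat.sub_zero, Nat.choose, pow_zero, one_mul, if_true]
        rw [qPoch3_succ]
        field_simp [hQ 0, hQ n, hone n]
      · obtain ⟨j, rfl⟩ : ∃ j, k = j + 1 := ⟨k - 1, by omega⟩
        rw [if_neg (by omega : ¬ j + 1 = 0)]
        rcases eq_or_lt_of_le (Nat.lt_succ_iff.mp hk) with hjn | hjn
        · -- k = n + 1
          rw [if_neg (by omega)]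
          have hj : j = n := by omega
          subst hj
          simp only [Nat.add_sub_cancel, Nat.sub_self]
          rw [qPoch3_succ, show (j + 1).choose 2 = j + j.choose 2 from by
            rw [Nat.choose_succ_succ, Nat.choose_one_right]]
          field_simp [hQ 0, hQ j, hone j]
          ring
        · -- j + 1 ≤ n
          rw [if_pos (by omega)]
          obtain ⟨m, rfl⟩ : ∃ m, n = j + 1 + m := ⟨n - (j + 1), by omega⟩
          simp only [Nat.add_sub_cancel, show j + 1 + m + 1 - (j + 1) = m + 1 from by omega,
            show j + 1 + m - (j + 1) = m from by omega,
            show j + 1 + m - j = m + 1 from by omega]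
          rw [qPoch3_succ q q j, qPoch3_succ q q m,
            show (j + 1).choose 2 = j + j.choose 2 from by
              rw [Nat.choose_succ_succ, Nat.choose_one_right]]
          field_simp [hQ j, hQ m, hone j, hone m, hone (j + 1 + m)]
          ring
    have eq1 : (1 - q * q ^ n) * ∑ k ∈ Finset.range (n + 1 + 1),
          q ^ (k.choose 2) * x ^ k / (qPoch3 q q k * qPoch3 q q (n + 1 - k))
        = (1 + x * q ^ n) * ∑ k ∈ Finset.range (n + 1),
            q ^ (k.choose 2) * x ^ k / (qPoch3 q q k * qPoch3 q q (n - k)) := by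
      rw [Finset.mul_sum, Finset.sum_congr rfl key, Finset.sum_add_distrib]
      have h1 : ∑ k ∈ Finset.range (n + 1 + 1),
          (if k ≤ n then q ^ (k.choose 2) * x ^ k /
              (qPoch3 q q k * qPoch3 q q (n - k)) else 0)
          = ∑ k ∈ Finset.range (n + 1),
              q ^ (k.choose 2) * x ^ k / (qPoch3 q q k * qPoch3 q q (n - k)) := by
        rw [Finset.sum_range_succ, if_neg (by omega), add_zero]
        exact Finset.sum_congr rfl fun k hk => if_pos (by
          rw [Finset.mem_range] at hk; omega)
      have h2 : ∑ k ∈ Finset.range (n + 1 + 1),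
          (if k = 0 then 0 else q ^ n * x *
              (q ^ ((k - 1).choose 2) * x ^ (k - 1) /
                (qPoch3 q q (k - 1) * qPoch3 q q (n - (k - 1)))))
          = q ^ n * x * ∑ k ∈ Finset.range (n + 1),
              q ^ (k.choose 2) * x ^ k / (qPoch3 q q k * qPoch3 q q (n - k)) := by
        rw [Finset.sum_range_succ' _ (n + 1)]
        simp [Finset.mul_sum]
      rw [h1, h2]
      ring
    have hL : qPoch3 q (-x) (n + 1) / qPoch3 q q (n + 1)
        = (1 + x * q ^ n) * (qPoch3 q (-x) n / qPoch3 q q n) / (1 - q * q ^ n) := by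
      rw [qPoch3_succ, qPoch3_succ]
      field_simp
      ring
    rw [hL, ih, ← eq1]
    exact mul_div_cancel_left₀ _ (hone n)

lemma norm_one_sub_tendsto (q : ℂ) (hq1 : ‖q‖ < 1) :
    Tendsto (fun n : ℕ => ‖(1 : ℂ) - q * q ^ n‖) atTop (nhds 1) := by
  have h : Tendsto (fun n : ℕ => q ^ n) atTop (nhds 0) :=
    tendsto_pow_atTop_nhds_zero_of_norm_lt_one hq1
  have h2 : Tendsto (fun n : ℕ => (1 : ℂ) - q * q ^ n) atTop (nhds 1) := by
    have := tendsto_const_nhds (x := (1 : ℂ)) (f := atTop (α := ℕ))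
    simpa using this.sub ((tendsto_const_nhds (x := q)).mul h)
  simpa using h2.norm

lemma sumA (q w : ℂ) (hq1 : ‖q‖ < 1) (hw : ‖w‖ < 1) :
    Summable (fun n : ℕ => ‖w ^ n / qPoch3 q q n‖) := by
  rcases eq_or_ne w 0 with rfl | hw0
  · refine summable_of_ne_finset_zero (s := {0}) fun n hn => ?_
    have : n ≠ 0 := by simpa using hn
    simp [zero_pow this]
  · have hQ := qPoch3_ne_zero q hq1
    refine summable_of_ratio_test_tendsto_lt_one hw
      (Eventually.of_forall fun n => ?_) ?_
    · simp only [ne_eq, norm_eq_zero]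
      exact div_ne_zero (pow_ne_zero _ hw0) (hQ n)
    · have hratio : ∀ n : ℕ,
          ‖‖w ^ (n + 1) / qPoch3 q q (n + 1)‖‖ / ‖‖w ^ n / qPoch3 q q n‖‖
            = ‖w‖ / ‖(1 : ℂ) - q * q ^ n‖ := by
        intro n
        have h1 : ‖w‖ ≠ 0 := norm_ne_zero_iff.mpr hw0
        have h2 : ‖qPoch3 q q n‖ ≠ 0 := norm_ne_zero_iff.mpr (hQ n)
        rw [Real.norm_of_nonneg (norm_nonneg _), Real.norm_of_nonneg (norm_nonneg _),
          qPoch3_succ]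
        simp only [norm_div, norm_mul, norm_pow]
        rw [div_div_div_comm]
        congr 1
        · rw [pow_succ, mul_div_cancel_left₀ _ (pow_ne_zero n h1)]
        · rw [mul_div_cancel_left₀ _ h2]
      have : Tendsto (fun n : ℕ => ‖w‖ / ‖(1 : ℂ) - q * q ^ n‖) atTop (nhds (‖w‖ / 1)) :=
        tendsto_const_nhds.div (norm_one_sub_tendsto q hq1) one_ne_zero
      rw [div_one] at this
      exact this.congr fun n => (hratio n).symm

lemma sumB (q w : ℂ) (hq0 : q ≠ 0) (hq1 : ‖q‖ < 1) :
    Summable (fun n : ℕ => ‖q ^ (n.choose 2) * w ^ n / qPoch3 q q n‖) := by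
  rcases eq_or_ne w 0 with rfl | hw0
  · refine summable_of_ne_finset_zero (s := {0}) fun n hn => ?_
    have : n ≠ 0 := by simpa using hn
    simp [zero_pow this]
  · have hQ := qPoch3_ne_zero q hq1
    refine summable_of_ratio_test_tendsto_lt_one one_pos
      (Eventually.of_forall fun n => ?_) ?_
    · simp only [ne_eq, norm_eq_zero]
      exact div_ne_zero (mul_ne_zero (pow_ne_zero _ hq0) (pow_ne_zero _ hw0)) (hQ n)
    · have hratio : ∀ n : ℕ,
          ‖‖q ^ ((n + 1).choose 2) * w ^ (n + 1) / qPoch3 q q (n + 1)‖‖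
            / ‖‖q ^ (n.choose 2) * w ^ n / qPoch3 q q n‖‖
            = ‖q‖ ^ n * ‖w‖ / ‖(1 : ℂ) - q * q ^ n‖ := by
        intro n
        have h1 : ‖w‖ ≠ 0 := norm_ne_zero_iff.mpr hw0
        have h2 : ‖qPoch3 q q n‖ ≠ 0 := norm_ne_zero_iff.mpr (hQ n)
        have h4 : ‖q‖ ≠ 0 := norm_ne_zero_iff.mpr hq0
        rw [Real.norm_of_nonneg (norm_nonneg _), Real.norm_of_nonneg (norm_nonneg _),
          qPoch3_succ]
        simp only [norm_div, norm_mul, norm_pow]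
        rw [div_div_div_comm]
        congr 1
        · rw [show (n + 1).choose 2 = n + n.choose 2 from by
              rw [Nat.choose_succ_succ, Nat.choose_one_right],
            div_eq_iff (mul_ne_zero (pow_ne_zero _ h4) (pow_ne_zero _ h1))]
          ring
        · rw [mul_div_cancel_left₀ _ h2]
      have hq' : Tendsto (fun n : ℕ => ‖q‖ ^ n * ‖w‖) atTop (nhds 0) := by
        simpa using (tendsto_pow_atTop_nhds_zero_of_lt_one (norm_nonneg q) hq1).mul_const ‖w‖
      have : Tendsto (fun n : ℕ => ‖q‖ ^ n * ‖w‖ / ‖(1 : ℂ) - q * q ^ n‖) atTop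
          (nhds (0 / 1)) := hq'.div (norm_one_sub_tendsto q hq1) one_ne_zero
      rw [zero_div] at this
      exact this.congr fun n => (hratio n).symm

/-- `e_q(αz) E_q(βz) = ∑ (-β/α;q)_n/(q;q)_n (αz)^n`. -/
theorem eq_mul_Eq (q α β z : ℂ) (hq0 : 0 < ‖q‖) (hq1 : ‖q‖ < 1) (hα : α ≠ 0)
    (hz : ‖α * z‖ < 1) :
    (∑' n : ℕ, (α * z) ^ n / qPoch3 q q n)
      * (∑' n : ℕ, q ^ (n.choose 2) * (β * z) ^ n / qPoch3 q q n)
      = ∑' n : ℕ, qPoch3 q (-β * α⁻¹) n / qPoch3 q q n * (α * z) ^ n := by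
  have hqne : q ≠ 0 := by simpa using hq0.ne'
  have hQ := qPoch3_ne_zero q hq1
  rw [tsum_mul_tsum_eq_tsum_sum_antidiagonal_of_summable_norm
    (sumA q (α * z) hq1 hz) (sumB q (β * z) hqne hq1)]
  refine tsum_congr fun n => ?_
  rw [Finset.Nat.sum_antidiagonal_eq_sum_range_succ
    (fun k l => (α * z) ^ k / qPoch3 q q k * (q ^ (l.choose 2) * (β * z) ^ l / qPoch3 q q l)) n]
  have hrefl := Finset.sum_range_reflect
    (fun k => (α * z) ^ k / qPoch3 q q k
      * (q ^ ((n - k).choose 2) * (β * z) ^ (n - k) / qPoch3 q q (n - k))) (n + 1)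
  rw [← hrefl]
  rw [show -β * α⁻¹ = -(β * α⁻¹) from by ring, qbinom q (β * α⁻¹) hq1 n, Finset.sum_mul]
  refine Finset.sum_congr rfl fun j hj => ?_
  rw [Finset.mem_range] at hj
  have hjn : j ≤ n := by omega
  obtain ⟨m, rfl⟩ : ∃ m, n = m + j := ⟨n - j, by omega⟩
  have e1 : m + j + 1 - 1 - j = m := by omega
  have e2 : m + j - m = j := by omega
  have e3 : m + j - j = m := by omega
  rw [e1, e2, e3]
  have hQj := hQ j
  have hQm := hQ m
  have hb : (β * α⁻¹) ^ j * (α * z) ^ j = (β * z) ^ j := by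
    rw [← mul_pow]
    congr 1
    field_simp
  rw [pow_add, show q ^ j.choose 2 * (β * α⁻¹) ^ j / (qPoch3 q q j * qPoch3 q q m)
        * ((α * z) ^ m * (α * z) ^ j)
      = q ^ j.choose 2 * ((β * α⁻¹) ^ j * (α * z) ^ j) / (qPoch3 q q j * qPoch3 q q m)
        * (α * z) ^ m from by ring, hb]
  field_simp
end

section
/- For 0 < |q| < 1 and |z| < 1, the Cauchy product formula holds: e_q(αz) e_q(βz) = ∑_{n=0}^∞ [∑_{k=0}^n qbinom(n,k) (α/β)^k] (βz)^n/(q;q)_n, where qbinom(n,k) = (q;q)_n/((q;q)_k (q;q)_{n-k}) and e_q(z) = ∑_{n=0}^∞ z^n/(q;q)_n. -/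
noncomputable def qPoch5 (q a : ℂ) (n : ℕ) : ℂ := ∏ j ∈ Finset.range n, (1 - a * q ^ j)

noncomputable def qBinom5 (q : ℂ) (n k : ℕ) : ℂ := qPoch5 q q n / (qPoch5 q q k * qPoch5 q q (n - k))

lemma qPoch5_ne_zero {q : ℂ} (hq1 : ‖q‖ < 1) (n : ℕ) : qPoch5 q q n ≠ 0 := by
  refine Finset.prod_ne_zero_iff.mpr fun j _ => ?_
  have h : ‖q * q ^ j‖ < 1 := by
    calc ‖q * q ^ j‖ = ‖q‖ * ‖q‖ ^ j := by simp [norm_mul, norm_pow]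
    _ ≤ ‖q‖ * 1 := mul_le_mul_of_nonneg_left (pow_le_one₀ (norm_nonneg q) hq1.le) (norm_nonneg q)
    _ < 1 := by simpa using hq1
  intro hc
  rw [sub_eq_zero] at hc
  rw [← hc] at h
  simp at h

lemma summable_norm_aux {q w : ℂ} (hq1 : ‖q‖ < 1) (hw : ‖w‖ < 1) :
    Summable (fun n : ℕ => ‖w ^ n / qPoch5 q q n‖) := by
  by_cases hw0 : w = 0
  · apply summable_of_ne_finset_zero (s := {0})
    intro n hn
    simp only [Finset.mem_singleton] at hn
    simp [hw0, zero_pow hn]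
  · apply summable_of_ratio_test_tendsto_lt_one hw
    · filter_upwards with n
      simp only [norm_ne_zero_iff]
      exact div_ne_zero (pow_ne_zero _ hw0) (qPoch5_ne_zero hq1 n)
    · have hq0 : Filter.Tendsto (fun n : ℕ => q * q ^ n) Filter.atTop (nhds 0) := by
        simpa using (tendsto_pow_atTop_nhds_zero_of_norm_lt_one hq1).const_mul q
      have h0 : Filter.Tendsto (fun n : ℕ => (1 : ℂ) - q * q ^ n) Filter.atTop (nhds 1) := by
        simpa using (tendsto_const_nhds (x := (1:ℂ))).sub hq0
      have h1 : Filter.Tendsto (fun n : ℕ => ‖(1 : ℂ) - q * q ^ n‖) Filter.atTop (nhds 1) := by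
        simpa using h0.norm
      have key : Filter.Tendsto (fun n : ℕ => ‖w‖ / ‖(1:ℂ) - q * q ^ n‖)
          Filter.atTop (nhds ‖w‖) := by
        have := (tendsto_const_nhds (x := ‖w‖)).div h1 one_ne_zero
        simpa [Pi.div_def] using this
      refine key.congr fun n => ?_
      have hpoch : qPoch5 q q (n + 1) = qPoch5 q q n * (1 - q * q ^ n) := by
        simp [qPoch5, Finset.prod_range_succ]
      have hP : ‖qPoch5 q q n‖ ≠ 0 := norm_ne_zero_iff.mpr (qPoch5_ne_zero hq1 n)
      have hF : ‖(1:ℂ) - q * q ^ n‖ ≠ 0 := by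
        have := qPoch5_ne_zero hq1 (n + 1)
        rw [hpoch] at this
        exact norm_ne_zero_iff.mpr (right_ne_zero_of_mul this)
      have hwn : ‖w‖ ^ n ≠ 0 := pow_ne_zero _ (norm_ne_zero_iff.mpr hw0)
      simp only [norm_norm, norm_div, norm_pow, hpoch, norm_mul, pow_succ]
      rw [div_div_div_comm, mul_comm (‖w‖ ^ n) ‖w‖, mul_div_assoc, div_self hwn,
        mul_one, mul_comm ‖qPoch5 q q n‖ ‖(1:ℂ) - q * q ^ n‖, mul_div_assoc,
        div_self hP, mul_one]

/-- `e_q(αz)e_q(βz) = ∑_n [∑_k qbinom(n,k)(α/β)^k] (βz)^n/(q;q)_n`. -/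
theorem eq_mul_eq (q α β z : ℂ) (hq0 : 0 < ‖q‖) (hq1 : ‖q‖ < 1) (hβ : β ≠ 0)
    (hαz : ‖α * z‖ < 1) (hβz : ‖β * z‖ < 1) :
    (∑' n : ℕ, (α * z) ^ n / qPoch5 q q n) * (∑' n : ℕ, (β * z) ^ n / qPoch5 q q n)
      = ∑' n : ℕ, (∑ k ∈ Finset.range (n + 1), qBinom5 q n k * (α / β) ^ k)
          * (β * z) ^ n / qPoch5 q q n := by
  rw [tsum_mul_tsum_eq_tsum_sum_range_of_summable_norm
    (summable_norm_aux hq1 hαz) (summable_norm_aux hq1 hβz)]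
  refine tsum_congr fun n => ?_
  rw [Finset.sum_mul, Finset.sum_div]
  refine Finset.sum_congr rfl fun k hk => ?_
  have hkn : k ≤ n := Nat.lt_succ_iff.mp (Finset.mem_range.mp hk)
  have hPn := qPoch5_ne_zero hq1 n
  have hPk := qPoch5_ne_zero hq1 k
  have hPnk := qPoch5_ne_zero hq1 (n - k)
  have key : (α * z) ^ k * (β * z) ^ (n - k) * β ^ k = α ^ k * (β * z) ^ n := by
    rw [mul_pow, mul_pow, mul_pow]
    have h1 : z ^ k * z ^ (n - k) = z ^ n := by
      rw [← pow_add]; congr 1; omega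
    have h2 : β ^ (n - k) * β ^ k = β ^ n := by
      rw [← pow_add]; congr 1; omega
    calc α ^ k * z ^ k * (β ^ (n - k) * z ^ (n - k)) * β ^ k
        = α ^ k * ((β ^ (n - k) * β ^ k) * (z ^ k * z ^ (n - k))) := by ring
      _ = α ^ k * (β ^ n * z ^ n) := by rw [h1, h2]
  rw [qBinom5, div_pow, div_mul_div_comm]
  field_simp
  linear_combination key
end

section
/- For 0 < |q| < 1 and |z| < 1 with α nonzero, e_q(αz)/e_q(βz) = ∑_{n=0}^∞ ((βα^{-1};q)_n/(q;q)_n) (αz)^n, i.e. the quotient of q-exponentials equals the 1φ0 basic hypergeometric series with parameter β/α at αz. -/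
open Filter Topology

set_option maxHeartbeats 1000000

noncomputable def qPoch7 (q a : ℂ) (n : ℕ) : ℂ := ∏ j ∈ Finset.range n, (1 - a * q ^ j)

noncomputable def C7 (q t x : ℂ) : ℂ := ∑' n : ℕ, qPoch7 q t n / qPoch7 q q n * x ^ n

lemma qP_zero (q a : ℂ) : qPoch7 q a 0 = 1 := by simp [qPoch7]

lemma qP_succ (q a : ℂ) (n : ℕ) : qPoch7 q a (n + 1) = qPoch7 q a n * (1 - a * q ^ n) :=
  Finset.prod_range_succ _ _

lemma one_sub_ne {u : ℂ} (hu : ‖u‖ < 1) : 1 - u ≠ 0 := by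
  intro h
  rw [sub_eq_zero] at h
  rw [← h] at hu
  simp at hu

lemma factor_ne {q : ℂ} (hq : ‖q‖ < 1) (n : ℕ) : 1 - q * q ^ n ≠ 0 := by
  apply one_sub_ne
  rw [norm_mul, norm_pow]
  calc ‖q‖ * ‖q‖ ^ n ≤ ‖q‖ * 1 := by
        gcongr
        exact pow_le_one₀ (norm_nonneg q) hq.le
    _ < 1 := by rw [mul_one]; exact hq

lemma qP_q_ne {q : ℂ} (hq : ‖q‖ < 1) (n : ℕ) : qPoch7 q q n ≠ 0 :=
  Finset.prod_ne_zero_iff.mpr fun j _ => factor_ne hq j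

lemma norm_mul_lt_one {q x : ℂ} (hq : ‖q‖ < 1) (hx : ‖x‖ < 1) : ‖q * x‖ < 1 := by
  rw [norm_mul]
  exact lt_of_le_of_lt (mul_le_of_le_one_left (norm_nonneg x) hq.le) hx

lemma norm_pow_mul_le {q x : ℂ} (hq : ‖q‖ < 1) (N : ℕ) : ‖q ^ N * x‖ ≤ ‖x‖ := by
  rw [norm_mul, norm_pow]
  exact mul_le_of_le_one_left (norm_nonneg x) (pow_le_one₀ (norm_nonneg q) hq.le)

lemma sumC {q : ℂ} (t x : ℂ) (hq : ‖q‖ < 1) (hx : ‖x‖ < 1) :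
    Summable (fun n : ℕ => qPoch7 q t n / qPoch7 q q n * x ^ n) := by
  apply summable_of_ratio_norm_eventually_le (r := (1 + ‖x‖) / 2)
  · linarith
  · have hq0 : Tendsto (fun n : ℕ => q ^ n) atTop (𝓝 0) :=
      tendsto_pow_atTop_nhds_zero_of_norm_lt_one hq
    have h1 : Tendsto (fun n : ℕ => ‖(1 - t * q ^ n) * x / (1 - q * q ^ n)‖) atTop
        (𝓝 ‖(1 - t * (0:ℂ)) * x / (1 - q * 0)‖) := by
      apply Tendsto.norm
      exact ((tendsto_const_nhds.sub (tendsto_const_nhds.mul hq0)).mul tendsto_const_nhds).div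
        (tendsto_const_nhds.sub (tendsto_const_nhds.mul hq0)) (by simp)
    simp only [mul_zero, sub_zero, one_mul, div_one] at h1
    have h2 : ∀ᶠ n in atTop, ‖(1 - t * q ^ n) * x / (1 - q * q ^ n)‖ ≤ (1 + ‖x‖) / 2 :=
      (h1.eventually_lt_const (by linarith)).mono fun n hn => hn.le
    filter_upwards [h2] with n hn
    have heq : qPoch7 q t (n + 1) / qPoch7 q q (n + 1) * x ^ (n + 1)
        = (qPoch7 q t n / qPoch7 q q n * x ^ n) * ((1 - t * q ^ n) * x / (1 - q * q ^ n)) := by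
      rw [qP_succ, qP_succ, pow_succ, mul_div_mul_comm]
      ring
    rw [heq, norm_mul, mul_comm]
    exact mul_le_mul_of_nonneg_right hn (norm_nonneg _)

lemma FE (q t x : ℂ) (hq : ‖q‖ < 1) (hx : ‖x‖ < 1) :
    (1 - x) * C7 q t x = (1 - t * x) * C7 q t (q * x) := by
  have hqx : ‖q * x‖ < 1 := norm_mul_lt_one hq hx
  have h1 := sumC t x hq hx
  have h2 := sumC t (q * x) hq hqx
  have key : C7 q t x - C7 q t (q * x) = x * C7 q t x - t * x * C7 q t (q * x) := by
    simp only [C7]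
    rw [← Summable.tsum_sub h1 h2, ← tsum_mul_left, ← tsum_mul_left,
      ← Summable.tsum_sub (h1.mul_left x) (h2.mul_left (t * x)), Summable.tsum_eq_zero_add (h1.sub h2)]
    simp only [pow_zero, mul_one, sub_self, zero_add]
    apply tsum_congr
    intro n
    rw [qP_succ, qP_succ]
    have hPn := qP_q_ne hq n
    have hfn := factor_ne hq n
    field_simp
    linear_combination (qPoch7 q t n * x * x ^ n * (1 - t * q ^ n)) * mul_inv_cancel₀ hfn
  linear_combination key

lemma limitC (q t x : ℂ) (hq : ‖q‖ < 1) (hx : ‖x‖ < 1) :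
    Tendsto (fun N : ℕ => C7 q t (q ^ N * x)) atTop (𝓝 1) := by
  have hS : Summable (fun n : ℕ => ‖qPoch7 q t (n + 1) / qPoch7 q q (n + 1) * x ^ (n + 1)‖) :=
    summable_norm_iff.mpr ((summable_nat_add_iff 1).mpr (sumC t x hq hx))
  set S := ∑' n : ℕ, ‖qPoch7 q t (n + 1) / qPoch7 q q (n + 1) * x ^ (n + 1)‖ with hSdef
  have hbound : ∀ N : ℕ, ‖C7 q t (q ^ N * x) - 1‖ ≤ ‖q‖ ^ N * S := by
    intro N
    have hxn : ‖q ^ N * x‖ < 1 := lt_of_le_of_lt (norm_pow_mul_le hq N) hx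
    have hsum := sumC t (q ^ N * x) hq hxn
    have h0 : C7 q t (q ^ N * x)
        = 1 + ∑' n : ℕ, qPoch7 q t (n + 1) / qPoch7 q q (n + 1) * (q ^ N * x) ^ (n + 1) := by
      rw [C7, Summable.tsum_eq_zero_add hsum, qP_zero, qP_zero]
      norm_num
    rw [h0, add_sub_cancel_left]
    have hnorm_sum : Summable
        (fun n : ℕ => ‖qPoch7 q t (n + 1) / qPoch7 q q (n + 1) * (q ^ N * x) ^ (n + 1)‖) :=
      summable_norm_iff.mpr ((summable_nat_add_iff 1).mpr hsum)
    calc ‖∑' n : ℕ, qPoch7 q t (n + 1) / qPoch7 q q (n + 1) * (q ^ N * x) ^ (n + 1)‖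
        ≤ ∑' n : ℕ, ‖qPoch7 q t (n + 1) / qPoch7 q q (n + 1) * (q ^ N * x) ^ (n + 1)‖ :=
          norm_tsum_le_tsum_norm hnorm_sum
      _ ≤ ∑' n : ℕ, ‖q‖ ^ N * ‖qPoch7 q t (n + 1) / qPoch7 q q (n + 1) * x ^ (n + 1)‖ := by
          apply Summable.tsum_le_tsum _ hnorm_sum (hS.mul_left _)
          intro n
          rw [norm_mul, norm_mul, mul_pow, norm_mul, norm_pow, norm_pow, norm_pow, ← pow_mul]
          have h1 : ‖q‖ ^ (N * (n + 1)) ≤ ‖q‖ ^ N :=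
            pow_le_pow_of_le_one (norm_nonneg q) hq.le (Nat.le_mul_of_pos_right N n.succ_pos)
          have h2 := norm_nonneg (qPoch7 q t (n + 1) / qPoch7 q q (n + 1))
          have h3 : (0:ℝ) ≤ ‖x‖ ^ (n + 1) := pow_nonneg (norm_nonneg x) _
          nlinarith [mul_le_mul_of_nonneg_right h1 (mul_nonneg h2 h3)]
      _ = ‖q‖ ^ N * S := tsum_mul_left
  rw [tendsto_iff_norm_sub_tendsto_zero]
  have hz : Tendsto (fun N : ℕ => ‖q‖ ^ N * S) atTop (𝓝 0) := by
    simpa using (tendsto_pow_atTop_nhds_zero_of_lt_one (norm_nonneg q) hq).mul_const S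
  exact squeeze_zero (fun N => norm_nonneg _) hbound hz

lemma iterG {q x : ℂ} (G : ℂ → ℂ) (hq : ‖q‖ < 1)
    (hG : ∀ y : ℂ, ‖y‖ ≤ ‖x‖ → G (q * y) = (1 - y) * G y) :
    ∀ N : ℕ, G (q ^ N * x) = (∏ j ∈ Finset.range N, (1 - q ^ j * x)) * G x := by
  intro N
  induction N with
  | zero => simp
  | succ n ih =>
    have hy : ‖q ^ n * x‖ ≤ ‖x‖ := norm_pow_mul_le hq n
    have harg : q ^ (n + 1) * x = q * (q ^ n * x) := by ring
    rw [harg, hG _ hy, ih, Finset.prod_range_succ]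
    ring

lemma E_ne {q w : ℂ} (hq : ‖q‖ < 1) (hw : ‖w‖ < 1) : C7 q 0 w ≠ 0 := by
  intro h0
  have hfe : ∀ y : ℂ, ‖y‖ ≤ ‖w‖ → C7 q 0 (q * y) = (1 - y) * C7 q 0 y := by
    intro y hy
    have := FE q 0 y hq (lt_of_le_of_lt hy hw)
    simpa using this.symm
  have hiter := iterG (C7 q 0) hq hfe
  have hlim := limitC q 0 w hq hw
  have hzero : Tendsto (fun N : ℕ => C7 q 0 (q ^ N * w)) atTop (𝓝 0) := by
    simp only [hiter, h0, mul_zero]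
    exact tendsto_const_nhds
  exact one_ne_zero (tendsto_nhds_unique hlim hzero)

/-- `e_q(αz)/e_q(βz) = 1φ0(β/α; —; q, αz)`. -/
theorem eq_div_eq (q α β z : ℂ) (hq0 : 0 < ‖q‖) (hq1 : ‖q‖ < 1) (hα : α ≠ 0)
    (hαz : ‖α * z‖ < 1) (hβz : ‖β * z‖ < 1) :
    (∑' n : ℕ, (α * z) ^ n / qPoch7 q q n) / (∑' n : ℕ, (β * z) ^ n / qPoch7 q q n)
      = ∑' n : ℕ, qPoch7 q (β * α⁻¹) n / qPoch7 q q n * (α * z) ^ n := by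
  set t : ℂ := β * α⁻¹ with ht
  set x : ℂ := α * z with hxdef
  have hx : ‖x‖ < 1 := hαz
  have htx : t * x = β * z := by
    rw [ht, hxdef, mul_assoc, inv_mul_cancel_left₀ hα]
  have htxn : ‖t * x‖ < 1 := by rw [htx]; exact hβz
  have hE : ∀ w : ℂ, (∑' n : ℕ, w ^ n / qPoch7 q q n) = C7 q 0 w := by
    intro w
    rw [C7]
    apply tsum_congr
    intro n
    have h1 : qPoch7 q 0 n = 1 := by simp [qPoch7]
    rw [h1, one_div_mul_eq_div]
  rw [hE, hE]
  show C7 q 0 x / C7 q 0 (β * z) = C7 q t x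
  rw [← htx]
  -- functional equations
  have hEfe : ∀ y : ℂ, ‖y‖ ≤ ‖x‖ → C7 q 0 (q * y) = (1 - y) * C7 q 0 y := by
    intro y hy
    have := FE q 0 y hq1 (lt_of_le_of_lt hy hx)
    simpa using this.symm
  have hFfe : ∀ y : ℂ, ‖y‖ ≤ ‖x‖ →
      C7 q 0 (t * (q * y)) * C7 q t (q * y) = (1 - y) * (C7 q 0 (t * y) * C7 q t y) := by
    intro y hy
    have hy1 : ‖y‖ < 1 := lt_of_le_of_lt hy hx
    have hty : ‖t * y‖ < 1 := by
      calc ‖t * y‖ = ‖t‖ * ‖y‖ := norm_mul _ _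
        _ ≤ ‖t‖ * ‖x‖ := by gcongr
        _ = ‖t * x‖ := (norm_mul _ _).symm
        _ < 1 := htxn
    have eq1 := FE q 0 (t * y) hq1 hty
    simp only [zero_mul, sub_zero, one_mul] at eq1
    have eq2 := FE q t y hq1 hy1
    have hne : (1 : ℂ) - t * y ≠ 0 := one_sub_ne hty
    have harg : t * (q * y) = q * (t * y) := by ring
    rw [harg]
    apply mul_left_cancel₀ hne
    linear_combination (-((1 - t * y) * C7 q t (q * y))) * eq1 - ((1 - t * y) * C7 q 0 (t * y)) * eq2
  -- iteration
  have iterE := iterG (q := q) (x := x) (C7 q 0) hq1 hEfe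
  have iterF : ∀ N : ℕ, C7 q 0 (t * (q ^ N * x)) * C7 q t (q ^ N * x)
      = (∏ j ∈ Finset.range N, (1 - q ^ j * x)) * (C7 q 0 (t * x) * C7 q t x) :=
    iterG (q := q) (x := x) (fun y => C7 q 0 (t * y) * C7 q t y) hq1 hFfe
  -- limits
  have limE := limitC q 0 x hq1 hx
  have limF : Tendsto (fun N : ℕ => C7 q 0 (t * (q ^ N * x)) * C7 q t (q ^ N * x)) atTop
      (𝓝 1) := by
    have l1 := limitC q 0 (t * x) hq1 htxn
    have l1' : Tendsto (fun N : ℕ => C7 q 0 (t * (q ^ N * x))) atTop (𝓝 1) := by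
      have hfun : (fun N : ℕ => C7 q 0 (t * (q ^ N * x)))
          = fun N : ℕ => C7 q 0 (q ^ N * (t * x)) := by
        funext N; congr 1; ring
      rw [hfun]; exact l1
    simpa using l1'.mul (limitC q t x hq1 hx)
  -- equality via limits
  have keyN : ∀ N : ℕ, C7 q 0 (q ^ N * x) * (C7 q 0 (t * x) * C7 q t x)
      = (C7 q 0 (t * (q ^ N * x)) * C7 q t (q ^ N * x)) * C7 q 0 x := by
    intro N
    rw [iterE N, iterF N]
    ring
  have hA : Tendsto (fun N : ℕ => C7 q 0 (q ^ N * x) * (C7 q 0 (t * x) * C7 q t x)) atTop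
      (𝓝 (C7 q 0 (t * x) * C7 q t x)) := by
    simpa using limE.mul_const (C7 q 0 (t * x) * C7 q t x)
  have hB : Tendsto (fun N : ℕ => C7 q 0 (q ^ N * x) * (C7 q 0 (t * x) * C7 q t x)) atTop
      (𝓝 (C7 q 0 x)) := by
    simp only [keyN]
    simpa using limF.mul_const (C7 q 0 x)
  have hkey : C7 q 0 x = C7 q 0 (t * x) * C7 q t x := tendsto_nhds_unique hB hA
  have hne : C7 q 0 (t * x) ≠ 0 := E_ne hq1 htxn
  rw [div_eq_iff hne]
  linear_combination hkey
end

section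
/- For 0 < |q| < 1 and |z| < 1, the multiplicative identity for 1φ0 series holds: (∑_{n=0}^∞ ((a;q)_n/(q;q)_n)(bz)^n) · (∑_{n=0}^∞ ((b;q)_n/(q;q)_n) z^n) = ∑_{n=0}^∞ ((ab;q)_n/(q;q)_n) z^n, i.e. 1φ0(a;—;q,bz) · 1φ0(b;—;q,z) = 1φ0(ab;—;q,z). -/
noncomputable def qPoch8 (q a : ℂ) (n : ℕ) : ℂ := ∏ j ∈ Finset.range n, (1 - a * q ^ j)

namespace OPZ
open Finset Real Filter


lemma geom_partial {r : ℝ} (h0 : 0 ≤ r) (h1 : r < 1) (n : ℕ) :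
    ∑ i ∈ Finset.range n, r ^ i ≤ (1 - r)⁻¹ := by
  have h := Summable.sum_le_tsum (Finset.range n) (fun i _ => pow_nonneg h0 i)
    (summable_geometric_of_lt_one h0 h1)
  rwa [tsum_geometric_of_lt_one h0 h1] at h

lemma qPoch_norm_le (q c : ℂ) (hq1 : ‖q‖ < 1) (n : ℕ) :
    ‖qPoch8 q c n‖ ≤ Real.exp (‖c‖ * (1 - ‖q‖)⁻¹) := by
  rw [qPoch8, norm_prod]
  calc ∏ j ∈ range n, ‖1 - c * q ^ j‖
      ≤ ∏ j ∈ range n, Real.exp (‖c‖ * ‖q‖ ^ j) := by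
        refine Finset.prod_le_prod (fun i _ => norm_nonneg _) (fun j _ => ?_)
        have h1 : ‖1 - c * q ^ j‖ ≤ 1 + ‖c‖ * ‖q‖ ^ j := by
          calc ‖1 - c * q ^ j‖ ≤ ‖(1:ℂ)‖ + ‖c * q ^ j‖ := norm_sub_le _ _
          _ = 1 + ‖c‖ * ‖q‖ ^ j := by rw [norm_one, norm_mul, norm_pow]
        exact h1.trans (by linarith [Real.add_one_le_exp (‖c‖ * ‖q‖ ^ j)])
    _ = Real.exp (∑ j ∈ range n, ‖c‖ * ‖q‖ ^ j) := (Real.exp_sum _ _).symm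
    _ ≤ Real.exp (‖c‖ * (1 - ‖q‖)⁻¹) := by
        apply Real.exp_le_exp.mpr
        rw [← Finset.mul_sum]
        exact mul_le_mul_of_nonneg_left (geom_partial (norm_nonneg q) hq1 n) (norm_nonneg c)

lemma one_sub_ge_exp {s t : ℝ} (h0 : 0 ≤ t) (hts : t ≤ s) (hs : s < 1) :
    Real.exp (-(t * (1 - s)⁻¹)) ≤ 1 - t := by
  have hs' : 0 < 1 - s := by linarith
  have ht' : 0 < 1 - t := by linarith
  have he := Real.add_one_le_exp (t * (1 - s)⁻¹)
  rw [Real.exp_neg]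
  rw [inv_le_comm₀ (Real.exp_pos _) ht']
  refine le_trans ?_ he
  rw [inv_le_iff_one_le_mul₀ ht']
  have hinv : (1 - s)⁻¹ * (1 - s) = 1 := inv_mul_cancel₀ (ne_of_gt hs')
  nlinarith [mul_nonneg h0 (le_of_lt (inv_pos.mpr hs'))]

lemma qPoch_norm_ge (q c : ℂ) (hq1 : ‖q‖ < 1) (hc : ‖c‖ < 1) (n : ℕ) :
    Real.exp (-(‖c‖ * (1 - ‖q‖)⁻¹ * (1 - ‖c‖)⁻¹)) ≤ ‖qPoch8 q c n‖ := by
  rw [qPoch8, norm_prod]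
  calc Real.exp (-(‖c‖ * (1 - ‖q‖)⁻¹ * (1 - ‖c‖)⁻¹))
      ≤ Real.exp (∑ j ∈ range n, -(‖c‖ * ‖q‖ ^ j * (1 - ‖c‖)⁻¹)) := by
        apply Real.exp_le_exp.mpr
        have hsum : ∑ j ∈ range n, -(‖c‖ * ‖q‖ ^ j * (1 - ‖c‖)⁻¹)
            = -((∑ j ∈ range n, ‖c‖ * ‖q‖ ^ j) * (1 - ‖c‖)⁻¹) := by
          rw [Finset.sum_mul, ← Finset.sum_neg_distrib]
        rw [hsum, neg_le_neg_iff]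
        refine mul_le_mul_of_nonneg_right ?_ (le_of_lt (inv_pos.mpr (by linarith)))
        rw [← Finset.mul_sum]
        exact mul_le_mul_of_nonneg_left (geom_partial (norm_nonneg q) hq1 n) (norm_nonneg c)
    _ ≤ ∏ j ∈ range n, ‖1 - c * q ^ j‖ := by
        rw [Real.exp_sum]
        refine Finset.prod_le_prod (fun i _ => (Real.exp_pos _).le) (fun j _ => ?_)
        have h1 : ‖c * q ^ j‖ ≤ ‖c‖ := by
          rw [norm_mul, norm_pow]
          calc ‖c‖ * ‖q‖ ^ j ≤ ‖c‖ * 1 :=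
            mul_le_mul_of_nonneg_left (pow_le_one₀ (norm_nonneg q) hq1.le) (norm_nonneg c)
          _ = ‖c‖ := mul_one _
        have h2 : Real.exp (-(‖c * q ^ j‖ * (1 - ‖c‖)⁻¹)) ≤ 1 - ‖c * q ^ j‖ :=
          one_sub_ge_exp (norm_nonneg _) h1 hc
        have h3 : 1 - ‖c * q ^ j‖ ≤ ‖1 - c * q ^ j‖ := by
          calc 1 - ‖c * q ^ j‖ = ‖(1:ℂ)‖ - ‖c * q ^ j‖ := by rw [norm_one]
          _ ≤ ‖1 - c * q ^ j‖ := norm_sub_norm_le _ _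
        refine le_trans ?_ (h2.trans h3)
        apply Real.exp_le_exp.mpr
        rw [norm_mul, norm_pow]
    _ = _ := rfl





noncomputable def phi8 (q c w : ℂ) : ℂ := ∑' n : ℕ, qPoch8 q c n / qPoch8 q q n * w ^ n

noncomputable def Mb (q c : ℂ) : ℝ :=
  Real.exp (‖c‖ * (1 - ‖q‖)⁻¹) * Real.exp (‖q‖ * (1 - ‖q‖)⁻¹ * (1 - ‖q‖)⁻¹)


lemma qq_pos (q : ℂ) (hq1 : ‖q‖ < 1) (n : ℕ) :
    Real.exp (-(‖q‖ * (1 - ‖q‖)⁻¹ * (1 - ‖q‖)⁻¹)) ≤ ‖qPoch8 q q n‖ :=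
  qPoch_norm_ge q q hq1 hq1 n

lemma qq_ne (q : ℂ) (hq1 : ‖q‖ < 1) (n : ℕ) : qPoch8 q q n ≠ 0 := by
  intro h
  have := qq_pos q hq1 n
  rw [h, norm_zero] at this
  exact absurd this (not_le.mpr (Real.exp_pos _))

lemma Mb_pos (q c : ℂ) : 0 < Mb q c := mul_pos (Real.exp_pos _) (Real.exp_pos _)

lemma coeff_norm_le (q c : ℂ) (hq1 : ‖q‖ < 1) (n : ℕ) :
    ‖qPoch8 q c n / qPoch8 q q n‖ ≤ Mb q c := by
  rw [norm_div]
  have h1 := qPoch_norm_le q c hq1 n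
  have h2 := qq_pos q hq1 n
  have h3 : (0:ℝ) < Real.exp (-(‖q‖ * (1 - ‖q‖)⁻¹ * (1 - ‖q‖)⁻¹)) := Real.exp_pos _
  have h4 : ‖qPoch8 q c n‖ / ‖qPoch8 q q n‖
      ≤ Real.exp (‖c‖ * (1 - ‖q‖)⁻¹) / Real.exp (-(‖q‖ * (1 - ‖q‖)⁻¹ * (1 - ‖q‖)⁻¹)) :=
    div_le_div₀ (Real.exp_pos _).le h1 h3 h2
  refine h4.trans ?_
  rw [Mb, Real.exp_neg]
  field_simp
  exact le_rfl

lemma summable_phi (q c w : ℂ) (hq1 : ‖q‖ < 1) (hw : ‖w‖ < 1) :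
    Summable (fun n : ℕ => qPoch8 q c n / qPoch8 q q n * w ^ n) := by
  refine Summable.of_norm_bounded
    ((summable_geometric_of_lt_one (norm_nonneg w) hw).mul_left (Mb q c)) (fun n => ?_)
  rw [norm_mul, norm_pow]
  exact mul_le_mul_of_nonneg_right (coeff_norm_le q c hq1 n) (pow_nonneg (norm_nonneg w) n)

lemma coeff_rec (q c : ℂ) (hq1 : ‖q‖ < 1) (n : ℕ) :
    qPoch8 q c (n + 1) / qPoch8 q q (n + 1) * (1 - q ^ (n + 1))
      = qPoch8 q c n / qPoch8 q q n * (1 - c * q ^ n) := by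
  have h1 : qPoch8 q c (n + 1) = qPoch8 q c n * (1 - c * q ^ n) := Finset.prod_range_succ _ n
  have h2 : qPoch8 q q (n + 1) = qPoch8 q q n * (1 - q * q ^ n) := Finset.prod_range_succ _ n
  have h3 : qPoch8 q q n ≠ 0 := qq_ne q hq1 n
  have h4 : qPoch8 q q (n + 1) ≠ 0 := qq_ne q hq1 (n + 1)
  have h5 : (1 - q * q ^ n) ≠ 0 := by
    intro h
    rw [h2, h, mul_zero] at h4
    exact h4 rfl
  rw [h1, h2, pow_succ', mul_div_mul_comm, mul_assoc, div_mul_cancel₀ _ h5]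

lemma funEq (q c : ℂ) (hq1 : ‖q‖ < 1) (w : ℂ) (hw : ‖w‖ < 1) :
    (1 - w) * phi8 q c w = (1 - c * w) * phi8 q c (q * w) := by
  have hqw : ‖q * w‖ < 1 := by
    rw [norm_mul]
    calc ‖q‖ * ‖w‖ ≤ 1 * ‖w‖ := mul_le_mul_of_nonneg_right hq1.le (norm_nonneg w)
    _ = ‖w‖ := one_mul _
    _ < 1 := hw
  have hS : Summable (fun n : ℕ => qPoch8 q c n / qPoch8 q q n * w ^ n) :=
    summable_phi q c w hq1 hw
  have hSq : Summable (fun n : ℕ => qPoch8 q c n / qPoch8 q q n * (q * w) ^ n) :=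
    summable_phi q c (q * w) hq1 hqw
  -- goal ⇔ ∑ (coeff n - coeff n q^n) w^n = ∑ (coeff n - c coeff n q^n) w^{n+1}
  have key : (∑' n : ℕ, (qPoch8 q c n / qPoch8 q q n * w ^ n
        - qPoch8 q c n / qPoch8 q q n * (q * w) ^ n))
      = ∑' n : ℕ, (w * (qPoch8 q c n / qPoch8 q q n * w ^ n)
        - c * w * (qPoch8 q c n / qPoch8 q q n * (q * w) ^ n)) := by
    have hL : Summable (fun n : ℕ => qPoch8 q c n / qPoch8 q q n * w ^ n
        - qPoch8 q c n / qPoch8 q q n * (q * w) ^ n) := hS.sub hSq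
    rw [hL.tsum_eq_zero_add]
    have h0 : qPoch8 q c 0 / qPoch8 q q 0 * w ^ 0
        - qPoch8 q c 0 / qPoch8 q q 0 * (q * w) ^ 0 = 0 := by
      simp
    rw [h0, zero_add]
    apply tsum_congr
    intro n
    have hrec := coeff_rec q c hq1 n
    set cn := qPoch8 q c n / qPoch8 q q n
    set cn1 := qPoch8 q c (n + 1) / qPoch8 q q (n + 1)
    have expand : cn1 * w ^ (n+1) - cn1 * (q*w) ^ (n+1)
        = (cn1 * (1 - q ^ (n+1))) * w ^ (n+1) := by
      rw [mul_pow]; ring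
    rw [expand, hrec]
    rw [mul_pow]
    ring
  have e1 : (∑' n : ℕ, (qPoch8 q c n / qPoch8 q q n * w ^ n
        - qPoch8 q c n / qPoch8 q q n * (q * w) ^ n))
      = phi8 q c w - phi8 q c (q * w) := hS.tsum_sub hSq
  have e2 : (∑' n : ℕ, (w * (qPoch8 q c n / qPoch8 q q n * w ^ n)
        - c * w * (qPoch8 q c n / qPoch8 q q n * (q * w) ^ n)))
      = w * phi8 q c w - c * w * phi8 q c (q * w) := by
    rw [Summable.tsum_sub (hS.mul_left w) (hSq.mul_left (c * w)), tsum_mul_left, tsum_mul_left]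
    rfl
  rw [e1, e2] at key
  linear_combination key








lemma phi_sub_one_bound (q c u z : ℂ) (hq1 : ‖q‖ < 1) (huz : ‖u‖ ≤ ‖z‖) (hz : ‖z‖ < 1) :
    ‖phi8 q c u - 1‖ ≤ Mb q c * (1 - ‖z‖)⁻¹ * ‖u‖ := by
  have hu : ‖u‖ < 1 := lt_of_le_of_lt huz hz
  have hS := summable_phi q c u hq1 hu
  have h0 : qPoch8 q c 0 / qPoch8 q q 0 * u ^ 0 = 1 := by simp [qPoch8]
  have hphi : phi8 q c u = 1 + ∑' m : ℕ, qPoch8 q c (m+1) / qPoch8 q q (m+1) * u ^ (m+1) := by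
    rw [phi8, hS.tsum_eq_zero_add, h0]
  rw [hphi]
  have hsum2 : Summable (fun m : ℕ => qPoch8 q c (m+1) / qPoch8 q q (m+1) * u ^ (m+1)) :=
    hS.comp_injective (add_left_injective 1)
  have hgeo : Summable (fun m : ℕ => Mb q c * ‖u‖ * ‖u‖ ^ m) :=
    (summable_geometric_of_lt_one (norm_nonneg u) hu).mul_left _
  have hterm : ∀ m : ℕ, ‖qPoch8 q c (m+1) / qPoch8 q q (m+1) * u ^ (m+1)‖
      ≤ Mb q c * ‖u‖ * ‖u‖ ^ m := by
    intro m
    rw [norm_mul, norm_pow]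
    have := coeff_norm_le q c hq1 (m+1)
    calc ‖qPoch8 q c (m+1) / qPoch8 q q (m+1)‖ * ‖u‖ ^ (m+1)
        ≤ Mb q c * ‖u‖ ^ (m+1) :=
          mul_le_mul_of_nonneg_right this (pow_nonneg (norm_nonneg u) _)
      _ = Mb q c * ‖u‖ * ‖u‖ ^ m := by rw [pow_succ]; ring
  have h1 : ‖(1:ℂ) + ∑' m : ℕ, qPoch8 q c (m+1) / qPoch8 q q (m+1) * u ^ (m+1) - 1‖
      = ‖∑' m : ℕ, qPoch8 q c (m+1) / qPoch8 q q (m+1) * u ^ (m+1)‖ := by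
    congr 1; ring
  rw [h1]
  have h2 : ‖∑' m : ℕ, qPoch8 q c (m+1) / qPoch8 q q (m+1) * u ^ (m+1)‖
      ≤ ∑' m : ℕ, Mb q c * ‖u‖ * ‖u‖ ^ m := by
    refine (norm_tsum_le_tsum_norm (hsum2.norm)).trans ?_
    exact Summable.tsum_le_tsum hterm hsum2.norm hgeo
  refine h2.trans ?_
  rw [tsum_mul_left, tsum_geometric_of_lt_one (norm_nonneg u) hu]
  have h3 : (1 - ‖u‖)⁻¹ ≤ (1 - ‖z‖)⁻¹ := by
    apply inv_anti₀ <;> linarith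
  calc Mb q c * ‖u‖ * (1 - ‖u‖)⁻¹ ≤ Mb q c * ‖u‖ * (1 - ‖z‖)⁻¹ :=
        mul_le_mul_of_nonneg_left h3 (mul_nonneg (Mb_pos q c).le (norm_nonneg u))
    _ = Mb q c * (1 - ‖z‖)⁻¹ * ‖u‖ := by ring

lemma tendsto_phi (q c z : ℂ) (hq1 : ‖q‖ < 1) (hz : ‖z‖ < 1) :
    Tendsto (fun n : ℕ => phi8 q c (q ^ n * z)) atTop (nhds 1) := by
  have key : Tendsto (fun n : ℕ => phi8 q c (q ^ n * z) - 1) atTop (nhds 0) := by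
    apply squeeze_zero_norm (a := fun n : ℕ => Mb q c * (1 - ‖z‖)⁻¹ * ‖z‖ * ‖q‖ ^ n)
    · intro n
      have huz : ‖q ^ n * z‖ ≤ ‖z‖ := by
        rw [norm_mul, norm_pow]
        calc ‖q‖ ^ n * ‖z‖ ≤ 1 * ‖z‖ :=
          mul_le_mul_of_nonneg_right (pow_le_one₀ (norm_nonneg q) hq1.le) (norm_nonneg z)
        _ = ‖z‖ := one_mul _
      refine (phi_sub_one_bound q c (q ^ n * z) z hq1 huz hz).trans ?_
      rw [norm_mul, norm_pow]
      apply le_of_eq; ring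
    · have := tendsto_pow_atTop_nhds_zero_of_lt_one (norm_nonneg q) hq1
      have h := this.const_mul (Mb q c * (1 - ‖z‖)⁻¹ * ‖z‖)
      simpa using h
  have := key.add_const 1
  simpa using this

theorem onePhiZero_mul' (q a b z : ℂ) (hq1 : ‖q‖ < 1)
    (hz : ‖z‖ < 1) (hbz : ‖b * z‖ < 1) :
    phi8 q a (b * z) * phi8 q b z = phi8 q (a * b) z := by
  set D : ℂ → ℂ := fun w => phi8 q a (b * w) * phi8 q b w - phi8 q (a * b) w with hD
  have keyD : ∀ w : ℂ, ‖w‖ < 1 → ‖b * w‖ < 1 →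
      (1 - w) * D w = (1 - a * b * w) * D (q * w) := by
    intro w hw hbw
    have h1 := funEq q b hq1 w hw
    have h2 := funEq q a hq1 (b * w) hbw
    have h3 := funEq q (a * b) hq1 w hw
    have e : b * (q * w) = q * (b * w) := by ring
    simp only [hD, e]
    linear_combination phi8 q a (b * w) * h1 + phi8 q b (q * w) * h2 - h3
  have iter : ∀ n : ℕ, qPoch8 q z n * D z = qPoch8 q (a * b * z) n * D (q ^ n * z) := by
    intro n
    induction n with
    | zero => simp [qPoch8]
    | succ n ih =>
      have hwn : ‖q ^ n * z‖ < 1 := by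
        rw [norm_mul, norm_pow]
        calc ‖q‖ ^ n * ‖z‖ ≤ 1 * ‖z‖ :=
          mul_le_mul_of_nonneg_right (pow_le_one₀ (norm_nonneg q) hq1.le) (norm_nonneg z)
        _ = ‖z‖ := one_mul _
        _ < 1 := hz
      have hbwn : ‖b * (q ^ n * z)‖ < 1 := by
        have e : b * (q ^ n * z) = q ^ n * (b * z) := by ring
        rw [e, norm_mul, norm_pow]
        calc ‖q‖ ^ n * ‖b * z‖ ≤ 1 * ‖b * z‖ :=
          mul_le_mul_of_nonneg_right (pow_le_one₀ (norm_nonneg q) hq1.le) (norm_nonneg _)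
        _ = ‖b * z‖ := one_mul _
        _ < 1 := hbz
      have hk := keyD (q ^ n * z) hwn hbwn
      have e2 : q * (q ^ n * z) = q ^ (n + 1) * z := by ring
      rw [e2] at hk
      have pz : qPoch8 q z (n + 1) = qPoch8 q z n * (1 - z * q ^ n) :=
        Finset.prod_range_succ _ n
      have pab : qPoch8 q (a * b * z) (n + 1)
          = qPoch8 q (a * b * z) n * (1 - a * b * z * q ^ n) :=
        Finset.prod_range_succ _ n
      rw [pz, pab]
      linear_combination (1 - z * q ^ n) * ih + qPoch8 q (a * b * z) n * hk
  have hDlim : Tendsto (fun n : ℕ => D (q ^ n * z)) atTop (nhds 0) := by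
    have t1 : Tendsto (fun n : ℕ => phi8 q a (b * (q ^ n * z))) atTop (nhds 1) := by
      have e : ∀ n : ℕ, b * (q ^ n * z) = q ^ n * (b * z) := fun n => by ring
      simp only [e]
      exact tendsto_phi q a (b * z) hq1 hbz
    have t2 := tendsto_phi q b z hq1 hz
    have t3 := tendsto_phi q (a * b) z hq1 hz
    have := (t1.mul t2).sub t3
    simpa using this
  set K : ℝ := Real.exp (‖a * b * z‖ * (1 - ‖q‖)⁻¹) with hK
  set L : ℝ := Real.exp (-(‖z‖ * (1 - ‖q‖)⁻¹ * (1 - ‖z‖)⁻¹)) with hL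
  have hbound : ∀ n : ℕ, L * ‖D z‖ ≤ K * ‖D (q ^ n * z)‖ := by
    intro n
    have h1 : L * ‖D z‖ ≤ ‖qPoch8 q z n‖ * ‖D z‖ :=
      mul_le_mul_of_nonneg_right (qPoch_norm_ge q z hq1 hz n) (norm_nonneg _)
    have h2 : ‖qPoch8 q z n‖ * ‖D z‖ = ‖qPoch8 q (a * b * z) n‖ * ‖D (q ^ n * z)‖ := by
      rw [← norm_mul, ← norm_mul, iter n]
    have h3 : ‖qPoch8 q (a * b * z) n‖ * ‖D (q ^ n * z)‖ ≤ K * ‖D (q ^ n * z)‖ :=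
      mul_le_mul_of_nonneg_right (qPoch_norm_le q (a * b * z) hq1 n) (norm_nonneg _)
    linarith
  have hlim : Tendsto (fun n : ℕ => K * ‖D (q ^ n * z)‖) atTop (nhds 0) := by
    have := (hDlim.norm).const_mul K
    simpa using this
  have hfin : L * ‖D z‖ ≤ 0 := ge_of_tendsto' hlim (fun n => hbound n)
  have hLpos : 0 < L := Real.exp_pos _
  have hDz : ‖D z‖ = 0 := le_antisymm (by nlinarith [norm_nonneg (D z)]) (norm_nonneg _)
  have hzero : D z = 0 := norm_eq_zero.mp hDz
  have hzero' : phi8 q a (b * z) * phi8 q b z - phi8 q (a * b) z = 0 := hzero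
  linear_combination hzero'



end OPZ

/-- `1φ0(a;—;q,bz) · 1φ0(b;—;q,z) = 1φ0(ab;—;q,z)`. -/
theorem onePhiZero_mul (q a b z : ℂ) (hq0 : 0 < ‖q‖) (hq1 : ‖q‖ < 1)
    (hz : ‖z‖ < 1) (hbz : ‖b * z‖ < 1) :
    (∑' n : ℕ, qPoch8 q a n / qPoch8 q q n * (b * z) ^ n)
      * (∑' n : ℕ, qPoch8 q b n / qPoch8 q q n * z ^ n)
      = ∑' n : ℕ, qPoch8 q (a * b) n / qPoch8 q q n * z ^ n :=
  OPZ.onePhiZero_mul' q a b z hq1 hz hbz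
end
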